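/- arXiv:2304.12690 — 2 statements merged into one kernel-verified Lean document; each statement's English description precedes it below -/
import Mathlib

section
/- Let P be an n×m matrix with nonnegative real entries, let λ_1,…,λ_r be positive reals, and suppose P admits a diagonal form of PSD factorization with respect to Λ = diag(√λ_1,…,√λ_r), i.e., there exist r×r positive semidefinite complex matrices C_1,…,C_n and D_1,…,D_m with tr(C_x D_y) = P(x,y) for all x,y and ∑_{x=1}^n C_x = ∑_{y=1}^m D_y = Λ. Then for all x∈[n] and y∈[m], (min_{1≤i≤r} λ_i)·P(x,y) ≤ (∑_{j=1}^m P(x,j))·(∑_{i=1}^n P(i,y)). -/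
open Matrix
open scoped ComplexOrder

theorem psd_diag_nonneg {r : ℕ} {M : Matrix (Fin r) (Fin r) ℂ} (hM : M.PosSemidef) (i : Fin r) :
    0 ≤ M i i := by
  exact hM.diag_nonneg

theorem psd_entry_sq {r : ℕ} {M : Matrix (Fin r) (Fin r) ℂ} (hM : M.PosSemidef) (i j : Fin r) :
    Complex.normSq (M i j) ≤ (M i i).re * (M j j).re := by
  have hN : (M.submatrix ![i, j] ![i, j]).PosSemidef := hM.submatrix _
  have hdet : 0 ≤ (M.submatrix ![i, j] ![i, j]).det := by
    rw [hN.1.det_eq_prod_eigenvalues]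
    exact Finset.prod_nonneg fun k _ => Complex.zero_le_real.mpr (hN.eigenvalues_nonneg k)
  rw [Matrix.det_fin_two] at hdet
  simp only [Matrix.submatrix_apply, Matrix.cons_val_zero, Matrix.cons_val_one,
    Matrix.head_cons] at hdet
  have hji : M j i = starRingEnd ℂ (M i j) := by
    have := congrFun (congrFun hM.1 j) i
    simpa [Matrix.conjTranspose_apply] using this.symm
  have h1 := (Complex.le_def.mp hdet).1
  have him_i : (M i i).im = 0 := ((Complex.le_def.mp (psd_diag_nonneg hM i)).2).symm
  have him_j : (M j j).im = 0 := ((Complex.le_def.mp (psd_diag_nonneg hM j)).2).symm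
  rw [hji] at h1
  simp [Complex.sub_re, Complex.mul_re, him_i, him_j, Complex.conj_re, Complex.conj_im] at h1
  rw [Complex.normSq_apply]
  linarith

theorem trace_mul_diagonal {r : ℕ} (A : Matrix (Fin r) (Fin r) ℂ) (v : Fin r → ℂ) :
    (A * Matrix.diagonal v).trace = ∑ i, A i i * v i := by
  simp [Matrix.trace, Matrix.diag, Matrix.mul_apply, Matrix.diagonal_apply, Finset.sum_ite_eq,
    mul_ite, mul_zero]

theorem trace_diagonal_mul {r : ℕ} (A : Matrix (Fin r) (Fin r) ℂ) (v : Fin r → ℂ) :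
    (Matrix.diagonal v * A).trace = ∑ i, v i * A i i := by
  simp [Matrix.trace, Matrix.diag, Matrix.mul_apply, Matrix.diagonal_apply, Finset.sum_ite_eq,
    ite_mul, zero_mul]

/-- If `P` admits a diagonal form of PSD factorization with respect to
`Λ = diagonal (√λ₁, …, √λᵣ)`, then `(min_i λᵢ)·P(x,y) ≤ (∑_j P(x,j))·(∑_i P(i,y))`
for all `x, y`. -/
theorem min_schmidt_coefficient_necessary_condition
    (n m r : ℕ) (P : Matrix (Fin n) (Fin m) ℝ)
    (hP : ∀ x y, 0 ≤ P x y)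
    (l : Fin r → ℝ) (hl : ∀ i, 0 < l i)
    (C : Fin n → Matrix (Fin r) (Fin r) ℂ) (D : Fin m → Matrix (Fin r) (Fin r) ℂ)
    (hC : ∀ x, (C x).PosSemidef) (hD : ∀ y, (D y).PosSemidef)
    (htr : ∀ x y, (C x * D y).trace = (P x y : ℂ))
    (hCsum : (∑ x, C x) = Matrix.diagonal (fun i => (Real.sqrt (l i) : ℂ)))
    (hDsum : (∑ y, D y) = Matrix.diagonal (fun i => (Real.sqrt (l i) : ℂ))) :
    ∀ x y, (⨅ i, l i) * P x y ≤ (∑ j, P x j) * (∑ i, P i y) := by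
  intro x y
  rcases Nat.eq_zero_or_pos r with hr | hr
  · subst hr
    have h0 : (P x y : ℂ) = 0 := by
      rw [← htr x y]; simp [Matrix.trace]
    have h0' : P x y = 0 := by exact_mod_cast h0
    rw [Real.iInf_of_isEmpty, zero_mul]
    exact mul_nonneg (Finset.sum_nonneg fun j _ => hP x j)
      (Finset.sum_nonneg fun i _ => hP i y)
  haveI : Nonempty (Fin r) := ⟨⟨0, hr⟩⟩
  set c : Fin r → ℝ := fun i => (C x i i).re with hc_def
  set d : Fin r → ℝ := fun i => (D y i i).re with hd_def
  set s : Fin r → ℝ := fun i => Real.sqrt (l i) with hs_def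
  have hs0 : ∀ i, 0 ≤ s i := fun i => Real.sqrt_nonneg _
  have hc0 : ∀ i, 0 ≤ c i := fun i => (Complex.le_def.mp (psd_diag_nonneg (hC x) i)).1
  have hd0 : ∀ i, 0 ≤ d i := fun i => (Complex.le_def.mp (psd_diag_nonneg (hD y) i)).1
  -- Row sum
  have hrow : ∑ j, P x j = ∑ i, s i * c i := by
    have h1 : ((∑ j, P x j : ℝ) : ℂ) = (C x * Matrix.diagonal (fun i => (s i : ℂ))).trace := by
      rw [← hDsum, Finset.mul_sum, Matrix.trace_sum]
      push_cast
      exact Finset.sum_congr rfl fun j _ => (htr x j).symm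
    have h2 := congrArg Complex.re h1
    rw [trace_mul_diagonal] at h2
    simpa [Complex.mul_re, mul_comm] using h2
  -- Column sum
  have hcol : ∑ i, P i y = ∑ i, s i * d i := by
    have h1 : ((∑ i, P i y : ℝ) : ℂ) = (Matrix.diagonal (fun i => (s i : ℂ)) * D y).trace := by
      rw [← hCsum, Finset.sum_mul, Matrix.trace_sum]
      push_cast
      exact Finset.sum_congr rfl fun i _ => (htr i y).symm
    have h2 := congrArg Complex.re h1
    rw [trace_diagonal_mul] at h2
    simpa [Complex.mul_re] using h2
  -- Entry bound: P x y ≤ (∑ i, √(c i * d i))²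
  have hentry : P x y ≤ (∑ i, Real.sqrt (c i * d i)) ^ 2 := by
    have h1 : P x y = ((C x * D y).trace).re := by rw [htr x y]; simp
    have h2 : ((C x * D y).trace).re = ∑ i, ∑ k, ((C x) i k * (D y) k i).re := by
      simp [Matrix.trace, Matrix.diag, Matrix.mul_apply, Complex.re_sum]
    rw [h1, h2, sq, Finset.sum_mul_sum]
    refine Finset.sum_le_sum fun i _ => Finset.sum_le_sum fun k _ => ?_
    have hb : ((C x) i k * (D y) k i).re ≤
        ‖(C x) i k‖ * ‖(D y) k i‖ := by
      calc ((C x) i k * (D y) k i).re ≤ ‖(C x) i k * (D y) k i‖ :=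
            Complex.re_le_norm _
        _ = ‖(C x) i k‖ * ‖(D y) k i‖ := norm_mul _ _
    have hCb : ‖(C x) i k‖ ≤ Real.sqrt (c i * c k) := by
      rw [Complex.norm_def]
      exact Real.sqrt_le_sqrt (psd_entry_sq (hC x) i k)
    have hDb : ‖(D y) k i‖ ≤ Real.sqrt (d k * d i) := by
      rw [Complex.norm_def]
      exact Real.sqrt_le_sqrt (psd_entry_sq (hD y) k i)
    have hsw : Real.sqrt (c i * c k) * Real.sqrt (d k * d i)
        = Real.sqrt (c i * d i) * Real.sqrt (c k * d k) := by
      rw [← Real.sqrt_mul (mul_nonneg (hc0 i) (hc0 k)),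
        ← Real.sqrt_mul (mul_nonneg (hc0 i) (hd0 i))]
      congr 1; ring
    calc ((C x) i k * (D y) k i).re
        ≤ ‖(C x) i k‖ * ‖(D y) k i‖ := hb
      _ ≤ Real.sqrt (c i * c k) * Real.sqrt (d k * d i) :=
          mul_le_mul hCb hDb (norm_nonneg _) (Real.sqrt_nonneg _)
      _ = Real.sqrt (c i * d i) * Real.sqrt (c k * d k) := hsw
  -- min bound
  set t := ⨅ i, l i with ht_def
  have ht0 : 0 ≤ t := le_ciInf fun i => (hl i).le
  have htle : ∀ i, t ≤ l i := fun i =>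
    ciInf_le (Set.Finite.bddBelow (Set.finite_range l)) i
  have key : t * (∑ i, Real.sqrt (c i * d i)) ^ 2 ≤ (∑ i, s i * c i) * (∑ i, s i * d i) := by
    have h1 : t * (∑ i, Real.sqrt (c i * d i)) ^ 2
        = (∑ i, Real.sqrt t * Real.sqrt (c i * d i)) ^ 2 := by
      rw [← Finset.mul_sum, mul_pow, Real.sq_sqrt ht0]
    have h2 : (∑ i, Real.sqrt t * Real.sqrt (c i * d i)) ^ 2
        ≤ (∑ i, Real.sqrt (s i * c i) * Real.sqrt (s i * d i)) ^ 2 := by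
      apply pow_le_pow_left₀
      · exact Finset.sum_nonneg fun i _ => by positivity
      refine Finset.sum_le_sum fun i _ => ?_
      have : Real.sqrt (s i * c i) * Real.sqrt (s i * d i)
          = Real.sqrt (l i) * Real.sqrt (c i * d i) := by
        rw [← Real.sqrt_mul (mul_nonneg (hs0 i) (hc0 i)), ← Real.sqrt_mul (hl i).le]
        congr 1
        have h : s i * s i = l i := Real.mul_self_sqrt (hl i).le
        rw [← h]; ring
      rw [this]
      exact mul_le_mul_of_nonneg_right (Real.sqrt_le_sqrt (htle i)) (Real.sqrt_nonneg _)
    have h3 : (∑ i, Real.sqrt (s i * c i) * Real.sqrt (s i * d i)) ^ 2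
        ≤ (∑ i, Real.sqrt (s i * c i) ^ 2) * (∑ i, Real.sqrt (s i * d i) ^ 2) :=
      Finset.sum_mul_sq_le_sq_mul_sq _ _ _
    have h4 : (∑ i, Real.sqrt (s i * c i) ^ 2) = ∑ i, s i * c i :=
      Finset.sum_congr rfl fun i _ => Real.sq_sqrt (mul_nonneg (hs0 i) (hc0 i))
    have h5 : (∑ i, Real.sqrt (s i * d i) ^ 2) = ∑ i, s i * d i :=
      Finset.sum_congr rfl fun i _ => Real.sq_sqrt (mul_nonneg (hs0 i) (hd0 i))
    rw [h4, h5] at h3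
    linarith
  calc t * P x y ≤ t * (∑ i, Real.sqrt (c i * d i)) ^ 2 :=
        mul_le_mul_of_nonneg_left hentry ht0
    _ ≤ (∑ i, s i * c i) * (∑ i, s i * d i) := key
    _ = (∑ j, P x j) * (∑ i, P i y) := by rw [hrow, hcol]
end

section
/- Let P be an n×m matrix with nonnegative real entries summing to 1 whose row sums P(x) = ∑_j P(x,j) are all strictly positive, let λ_1,…,λ_r be positive reals, and suppose P admits a diagonal form of PSD factorization with respect to Λ = diag(√λ_1,…,√λ_r), i.e., there exist r×r positive semidefinite complex matrices C_1,…,C_n and D_1,…,D_m with tr(C_x D_y) = P(x,y) for all x,y and ∑_{x=1}^n C_x = ∑_{y=1}^m D_y = Λ. Define V'_2(P) = ∑_{y=1}^m √( ∑_{x=1}^n P(x)·( P(x,y)/P(x) − P(y) )² ), where P(y) = ∑_i P(i,y). Then ∑_{i=1}^r λ_i² ≤ 1 − V'_2(P)²/r. -/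
open Matrix
open scoped ComplexOrder

namespace Statement9Aux

variable {r : ℕ}

private lemma re_sq_le_norm_sq (z : ℂ) : z.re ^ 2 ≤ ‖z‖ ^ 2 := by
  have h : ‖z‖ ^ 2 = z.re ^ 2 + z.im ^ 2 := by
    rw [Complex.sq_norm, Complex.normSq_apply]; ring
  nlinarith [sq_nonneg z.im]

private lemma trace_entries (X Y : Matrix (Fin r) (Fin r) ℂ) :
    (Xᴴ * Y).trace = ∑ p : Fin r × Fin r, (starRingEnd ℂ) (X p.2 p.1) * Y p.2 p.1 := by
  rw [Matrix.trace, Fintype.sum_prod_type]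
  simp [Matrix.diag, Matrix.mul_apply, Matrix.conjTranspose_apply]

private lemma trace_self_re (X : Matrix (Fin r) (Fin r) ℂ) :
    (Xᴴ * X).trace.re = ∑ p : Fin r × Fin r, ‖X p.2 p.1‖ ^ 2 := by
  rw [trace_entries, Complex.re_sum]
  refine Finset.sum_congr rfl fun p _ => ?_
  rw [show (starRingEnd ℂ) (X p.2 p.1) * X p.2 p.1 = X p.2 p.1 * (starRingEnd ℂ) (X p.2 p.1) by
        ring,
    Complex.mul_conj]
  rw [Complex.ofReal_re, ← Complex.sq_norm]

/-- Cauchy-Schwarz for the Frobenius inner product. -/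
private lemma trace_cs (X Y : Matrix (Fin r) (Fin r) ℂ) :
    ((Xᴴ * Y).trace.re) ^ 2 ≤ (Xᴴ * X).trace.re * (Yᴴ * Y).trace.re := by
  have h1 : ‖(Xᴴ * Y).trace‖ ≤ ∑ p : Fin r × Fin r, ‖X p.2 p.1‖ * ‖Y p.2 p.1‖ := by
    rw [trace_entries]
    refine (norm_sum_le _ _).trans (le_of_eq ?_)
    refine Finset.sum_congr rfl fun p _ => ?_
    rw [norm_mul, RCLike.norm_conj]
  have h2 : ((Xᴴ * Y).trace.re) ^ 2 ≤ (∑ p : Fin r × Fin r, ‖X p.2 p.1‖ * ‖Y p.2 p.1‖) ^ 2 := by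
    refine (re_sq_le_norm_sq _).trans ?_
    exact pow_le_pow_left₀ (norm_nonneg _) h1 2
  refine h2.trans ?_
  rw [trace_self_re X, trace_self_re Y]
  exact Finset.sum_mul_sq_le_sq_mul_sq _ _ _

private lemma psd_diag_nonneg {M : Matrix (Fin r) (Fin r) ℂ} (hM : M.PosSemidef) (i : Fin r) :
    0 ≤ M i i := by
  have h := hM.dotProduct_mulVec_nonneg (Pi.single i 1)
  rwa [← Pi.single_star, star_one, Matrix.mulVec_single, single_dotProduct,
    Pi.smul_apply, Matrix.col_apply, op_smul_eq_mul, mul_one, one_mul] at h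

private lemma psd_diag_re_nonneg {M : Matrix (Fin r) (Fin r) ℂ} (hM : M.PosSemidef) (i : Fin r) :
    0 ≤ (M i i).re :=
  (Complex.nonneg_iff.mp (psd_diag_nonneg hM i)).1

private lemma psd_diag_im_zero {M : Matrix (Fin r) (Fin r) ℂ} (hM : M.PosSemidef) (i : Fin r) :
    (M i i).im = 0 :=
  ((Complex.nonneg_iff.mp (psd_diag_nonneg hM i)).2).symm

private lemma psd_trace_re_nonneg {M : Matrix (Fin r) (Fin r) ℂ} (hM : M.PosSemidef) :
    0 ≤ M.trace.re := by
  rw [Matrix.trace, Complex.re_sum]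
  exact Finset.sum_nonneg fun i _ => psd_diag_re_nonneg hM i

private lemma psd_entry_sq {M : Matrix (Fin r) (Fin r) ℂ} (hM : M.PosSemidef) (i j : Fin r) :
    ‖M i j‖ ^ 2 ≤ (M i i).re * (M j j).re := by
  by_cases hij : i = j
  · subst hij
    have h : ‖M i i‖ ^ 2 = (M i i).re ^ 2 + (M i i).im ^ 2 := by
      rw [Complex.sq_norm, Complex.normSq_apply]; ring
    rw [h, psd_diag_im_zero hM i]
    nlinarith []
  · set a : ℝ := (M i i).re with ha
    set b : ℝ := (M j j).re with hb
    have hMii : M i i = (a : ℂ) := by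
      apply Complex.ext
      · simp [ha]
      · simp [psd_diag_im_zero hM i]
    have hMjj : M j j = (b : ℂ) := by
      apply Complex.ext
      · simp [hb]
      · simp [psd_diag_im_zero hM j]
    by_cases hz0 : M i j = 0
    · rw [hz0]
      simpa using mul_nonneg (psd_diag_re_nonneg hM i) (psd_diag_re_nonneg hM j)
    · have hji : M j i = (starRingEnd ℂ) (M i j) := by
        have h' := congrFun (congrFun hM.1 j) i
        rw [Matrix.conjTranspose_apply] at h'
        exact h'.symm
      have e1 : (starRingEnd ℂ) (M i j) * M i j = (Complex.normSq (M i j) : ℂ) := by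
        rw [mul_comm, Complex.mul_conj]
      have key : ∀ t : ℝ, 0 ≤ (a * Complex.normSq (M i j)) * (t * t) +
          (-2 * Complex.normSq (M i j)) * t + b := by
        intro t
        set c : ℂ := -(t : ℂ) * M i j with hc
        have hsc : star c = -(t : ℂ) * (starRingEnd ℂ) (M i j) := by
          rw [hc]
          simp [star_mul', Complex.conj_ofReal, mul_comm]
        have h := hM.dotProduct_mulVec_nonneg (Pi.single i c + Pi.single j 1)
        rw [star_add, ← Pi.single_star, ← Pi.single_star, star_one,
          Matrix.mulVec_add, Matrix.mulVec_single, Matrix.mulVec_single,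
          add_dotProduct, dotProduct_add, dotProduct_add,
          single_dotProduct, single_dotProduct,
          single_dotProduct, single_dotProduct] at h
        simp only [Pi.smul_apply, Matrix.col_apply, op_smul_eq_mul, mul_one, one_mul] at h
        have hQ : star c * (M i i * c) + star c * M i j + (M j i * c + M j j) =
            (((a * Complex.normSq (M i j)) * (t * t) +
              (-2 * Complex.normSq (M i j)) * t + b : ℝ) : ℂ) := by
          rw [hji, hsc, hc, hMii, hMjj]
          calc -(t : ℂ) * (starRingEnd ℂ) (M i j) * ((a : ℂ) * (-(t : ℂ) * M i j)) +
                -(t : ℂ) * (starRingEnd ℂ) (M i j) * M i j +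
                ((starRingEnd ℂ) (M i j) * (-(t : ℂ) * M i j) + (b : ℂ)) =
              (a : ℂ) * ((starRingEnd ℂ) (M i j) * M i j) * ((t : ℂ) * (t : ℂ)) +
                (-2 * ((starRingEnd ℂ) (M i j) * M i j)) * (t : ℂ) + (b : ℂ) := by ring
            _ = (a : ℂ) * (Complex.normSq (M i j) : ℂ) * ((t : ℂ) * (t : ℂ)) +
                (-2 * (Complex.normSq (M i j) : ℂ)) * (t : ℂ) + (b : ℂ) := by rw [e1]
            _ = _ := by push_cast; ring
        rw [hQ] at h
        exact (Complex.nonneg_iff.mp h).1.trans (le_of_eq (Complex.ofReal_re _))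
      have hd := discrim_le_zero key
      rw [discrim] at hd
      have hnz : 0 < Complex.normSq (M i j) := Complex.normSq_pos.mpr hz0
      have hnorm : ‖M i j‖ ^ 2 = Complex.normSq (M i j) := by
        rw [Complex.sq_norm]
      rw [hnorm]
      nlinarith [hd, hnz]

/-- For a PSD matrix, `tr(M²) ≤ (tr M)²`. -/
private lemma psd_trace_sq {M : Matrix (Fin r) (Fin r) ℂ} (hM : M.PosSemidef) :
    (M * M).trace.re ≤ (M.trace.re) ^ 2 := by
  have hself : M * M = Mᴴ * M := by rw [hM.1]
  rw [hself, trace_self_re]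
  have h1 : ∀ p : Fin r × Fin r, ‖M p.2 p.1‖ ^ 2 ≤ (M p.2 p.2).re * (M p.1 p.1).re :=
    fun p => psd_entry_sq hM p.2 p.1
  refine (Finset.sum_le_sum fun p _ => h1 p).trans (le_of_eq ?_)
  rw [Matrix.trace, Complex.re_sum, sq, Fintype.sum_prod_type, Finset.sum_mul_sum]
  rw [Finset.sum_comm]
  simp [Matrix.diag]

private lemma psd_sum {ι : Type*} (s : Finset ι) (f : ι → Matrix (Fin r) (Fin r) ℂ)
    (hf : ∀ i ∈ s, (f i).PosSemidef) : (∑ i ∈ s, f i).PosSemidef := by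
  classical
  induction s using Finset.induction_on with
  | empty => simpa using Matrix.PosSemidef.zero
  | insert _ _ hnotmem ih =>
    rename_i a t
    rw [Finset.sum_insert hnotmem]
    exact (hf a (Finset.mem_insert_self a t)).add
      (ih fun i hi => hf i (Finset.mem_insert_of_mem hi))

end Statement9Aux

section SqrtCompat
open scoped MatrixOrder

noncomputable def Matrix.PosSemidef.sqrt {r : ℕ} {A : Matrix (Fin r) (Fin r) ℂ}
    (_ : A.PosSemidef) : Matrix (Fin r) (Fin r) ℂ :=
  CFC.sqrt A

lemma Matrix.PosSemidef.posSemidef_sqrt {r : ℕ} {A : Matrix (Fin r) (Fin r) ℂ}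
    (hA : A.PosSemidef) : hA.sqrt.PosSemidef :=
  (CFC.sqrt_nonneg A).posSemidef

lemma Matrix.PosSemidef.sqrt_mul_self {r : ℕ} {A : Matrix (Fin r) (Fin r) ℂ}
    (hA : A.PosSemidef) : hA.sqrt * hA.sqrt = A :=
  CFC.sqrt_mul_sqrt_self A hA.nonneg

end SqrtCompat

open Statement9Aux in
/-- If `P` (a probability matrix with strictly positive row sums) admits a
diagonal form of PSD factorization with respect to `Λ = diagonal (√λ₁, …, √λᵣ)`, then
`∑ᵢ λᵢ² ≤ 1 − V'₂(P)²/r`, where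
`V'₂(P) = ∑_y √(∑_x P(x)·(P(x,y)/P(x) − P(y))²)`. -/
theorem sum_squares_schmidt_le_one_sub_V2_squared_div_r
    (n m r : ℕ) (P : Matrix (Fin n) (Fin m) ℝ)
    (hP : ∀ x y, 0 ≤ P x y) (hPsum : ∑ x, ∑ y, P x y = 1)
    (hrow : ∀ x, 0 < ∑ j, P x j)
    (l : Fin r → ℝ) (hl : ∀ i, 0 < l i)
    (C : Fin n → Matrix (Fin r) (Fin r) ℂ) (D : Fin m → Matrix (Fin r) (Fin r) ℂ)
    (hC : ∀ x, (C x).PosSemidef) (hD : ∀ y, (D y).PosSemidef)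
    (htr : ∀ x y, (C x * D y).trace = (P x y : ℂ))
    (hCsum : (∑ x, C x) = Matrix.diagonal (fun i => (Real.sqrt (l i) : ℂ)))
    (hDsum : (∑ y, D y) = Matrix.diagonal (fun i => (Real.sqrt (l i) : ℂ))) :
    ∑ i, (l i) ^ 2 ≤ 1 -
      (∑ y, Real.sqrt (∑ x, (∑ j, P x j) *
          (P x y / (∑ j, P x j) - ∑ i, P i y) ^ 2)) ^ 2 / (r : ℝ) := by
  classical
  -- the case `r = 0` is impossible
  rcases Nat.eq_zero_or_pos r with hr0 | hrpos
  · exfalso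
    have h0 : ∀ x y, P x y = 0 := by
      intro x y
      have h := htr x y
      have h1 : (C x * D y).trace = 0 := by
        subst hr0
        rw [Matrix.trace]
        simp
      rw [h1] at h
      exact_mod_cast h.symm
    simp only [h0, Finset.sum_const_zero] at hPsum
    exact one_ne_zero hPsum.symm
  have hrpos' : (0:ℝ) < r := by exact_mod_cast hrpos
  have diag_eq : ∀ (f g : Fin r → ℂ), (∀ i, f i = g i) →
      Matrix.diagonal f = Matrix.diagonal g := fun f g h => by rw [funext h]
  -- basic real square-root facts
  set q : Fin r → ℝ := fun i => Real.sqrt (Real.sqrt (l i)) with hq_def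
  have hsq_pos : ∀ i, 0 < Real.sqrt (l i) := fun i => Real.sqrt_pos.2 (hl i)
  have hq_pos : ∀ i, 0 < q i := fun i => Real.sqrt_pos.2 (hsq_pos i)
  have hq_mul : ∀ i, q i * q i = Real.sqrt (l i) := fun i => Real.mul_self_sqrt (hsq_pos i).le
  have hs_mul : ∀ i, Real.sqrt (l i) * Real.sqrt (l i) = l i :=
    fun i => Real.mul_self_sqrt (hl i).le
  have hqC_ne : ∀ i, ((q i : ℂ)) ≠ 0 := fun i => Complex.ofReal_ne_zero.mpr (hq_pos i).ne'
  -- the diagonal matrices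
  set Lam : Matrix (Fin r) (Fin r) ℂ :=
    Matrix.diagonal (fun i => (Real.sqrt (l i) : ℂ)) with hLam_def
  set Lq : Matrix (Fin r) (Fin r) ℂ := Matrix.diagonal (fun i => (q i : ℂ)) with hLq_def
  set Lqi : Matrix (Fin r) (Fin r) ℂ := Matrix.diagonal (fun i => (q i : ℂ)⁻¹) with hLqi_def
  set rho : Matrix (Fin r) (Fin r) ℂ := Matrix.diagonal (fun i => (l i : ℂ)) with hrho_def
  have hLqLq : Lq * Lq = Lam := by
    rw [hLq_def, hLam_def, Matrix.diagonal_mul_diagonal]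
    exact diag_eq _ _ (fun i => by rw [← Complex.ofReal_mul, hq_mul])
  have hLqLqi : Lq * Lqi = 1 := by
    rw [hLq_def, hLqi_def, Matrix.diagonal_mul_diagonal, ← Matrix.diagonal_one]
    exact diag_eq _ _ (fun i => mul_inv_cancel₀ (hqC_ne i))
  have hLqiLq : Lqi * Lq = 1 := by
    rw [hLq_def, hLqi_def, Matrix.diagonal_mul_diagonal, ← Matrix.diagonal_one]
    exact diag_eq _ _ (fun i => inv_mul_cancel₀ (hqC_ne i))
  have hLqirho : Lqi * rho * Lqi = Lam := by
    rw [hLqi_def, hrho_def, hLam_def, Matrix.diagonal_mul_diagonal,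
      Matrix.diagonal_mul_diagonal]
    refine diag_eq _ _ (fun i => ?_)
    have h1 : (l i : ℂ) = ((q i : ℂ) * (q i : ℂ)) * ((q i : ℂ) * (q i : ℂ)) := by
      rw [← Complex.ofReal_mul, hq_mul, ← Complex.ofReal_mul, hs_mul]
    have h2 : (Real.sqrt (l i) : ℂ) = (q i : ℂ) * (q i : ℂ) := by
      rw [← Complex.ofReal_mul, hq_mul]
    rw [h1, h2]
    field_simp
  have hLqrhoLq : Lq * Lam * Lq = rho := by
    rw [hLq_def, hLam_def, hrho_def, Matrix.diagonal_mul_diagonal,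
      Matrix.diagonal_mul_diagonal]
    refine diag_eq _ _ (fun i => ?_)
    have h2 : (Real.sqrt (l i) : ℂ) = (q i : ℂ) * (q i : ℂ) := by
      rw [← Complex.ofReal_mul, hq_mul]
    have h1 : (l i : ℂ) = ((q i : ℂ) * (q i : ℂ)) * ((q i : ℂ) * (q i : ℂ)) := by
      rw [← Complex.ofReal_mul, hq_mul, ← Complex.ofReal_mul, hs_mul]
    rw [h1, h2]
    ring
  have hLq_herm : Lqᴴ = Lq := by
    rw [hLq_def, Matrix.diagonal_conjTranspose]
    refine diag_eq _ _ (fun i => ?_)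
    simp [Pi.star_apply, Complex.star_def, Complex.conj_ofReal]
  have hLqi_herm : Lqiᴴ = Lqi := by
    rw [hLqi_def, Matrix.diagonal_conjTranspose]
    refine diag_eq _ _ (fun i => ?_)
    simp [Pi.star_apply, Complex.star_def, ← Complex.ofReal_inv, Complex.conj_ofReal]
  have hrho_herm : rhoᴴ = rho := by
    rw [hrho_def, Matrix.diagonal_conjTranspose]
    refine diag_eq _ _ (fun i => ?_)
    simp [Pi.star_apply, Complex.star_def, Complex.conj_ofReal]
  -- trace identities with Λ
  have hCLam : ∀ x, (C x * Lam).trace = ((∑ j, P x j : ℝ) : ℂ) := by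
    intro x
    rw [← hDsum, Finset.mul_sum, Matrix.trace_sum]
    simp_rw [htr]
    rw [Complex.ofReal_sum]
  have hLamD : ∀ y, (Lam * D y).trace = ((∑ i, P i y : ℝ) : ℂ) := by
    intro y
    rw [← hCsum, Finset.sum_mul, Matrix.trace_sum]
    simp_rw [htr]
    rw [Complex.ofReal_sum]
  -- the renormalized matrices
  set N : Fin m → Matrix (Fin r) (Fin r) ℂ := fun y => Lqi * D y * Lqi with hN_def
  set Mc : Fin n → Matrix (Fin r) (Fin r) ℂ := fun x => Lq * C x * Lq with hMc_def
  have hN_psd : ∀ y, (N y).PosSemidef := by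
    intro y
    have h := (hD y).conjTranspose_mul_mul_same Lqi
    rwa [hLqi_herm] at h
  have hMc_psd : ∀ x, (Mc x).PosSemidef := by
    intro x
    have h := (hC x).conjTranspose_mul_mul_same Lq
    rwa [hLq_herm] at h
  have hNsum : ∑ y, N y = 1 := by
    simp only [hN_def]
    rw [← Finset.sum_mul, ← Finset.mul_sum, hDsum]
    calc Lqi * Lam * Lqi = Lqi * (Lq * Lq) * Lqi := by rw [hLqLq]
      _ = 1 := by
          simp only [Matrix.mul_assoc]
          rw [hLqLqi, mul_one, hLqiLq]
  have hMcsum : ∑ x, Mc x = rho := by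
    simp only [hMc_def]
    rw [← Finset.sum_mul, ← Finset.mul_sum, hCsum, hLqrhoLq]
  have hMc_trace : ∀ x, (Mc x).trace = ((∑ j, P x j : ℝ) : ℂ) := by
    intro x
    simp only [hMc_def]
    rw [Matrix.trace_mul_comm (Lq * C x) Lq, ← Matrix.mul_assoc, hLqLq,
      Matrix.trace_mul_comm Lam (C x), hCLam]
  have collapseA : ∀ Z : Matrix (Fin r) (Fin r) ℂ, Lq * (Lqi * Z) = Z := by
    intro Z
    rw [← Matrix.mul_assoc, hLqLqi, one_mul]
  have hMcN_trace : ∀ x y, (Mc x * N y).trace = (P x y : ℂ) := by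
    intro x y
    simp only [hMc_def, hN_def]
    have e : Lq * C x * Lq * (Lqi * (D y * Lqi)) = Lq * (C x * (D y * Lqi)) := by
      simp only [Matrix.mul_assoc]
      rw [collapseA]
    rw [Matrix.mul_assoc Lqi (D y) Lqi, e,
      Matrix.trace_mul_comm Lq (C x * (D y * Lqi))]
    simp only [Matrix.mul_assoc]
    rw [hLqiLq, mul_one, htr]
  have hrhoN_trace : ∀ y, (rho * N y).trace = ((∑ i, P i y : ℝ) : ℂ) := by
    intro y
    simp only [hN_def]
    rw [Matrix.trace_mul_comm rho (Lqi * D y * Lqi)]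
    simp only [Matrix.mul_assoc]
    rw [Matrix.trace_mul_comm Lqi (D y * (Lqi * rho))]
    simp only [Matrix.mul_assoc]
    have h9 : Lqi * (rho * Lqi) = Lam := by rw [← Matrix.mul_assoc]; exact hLqirho
    rw [h9, Matrix.trace_mul_comm (D y) Lam, hLamD]
  -- the centered matrices A and their normalized versions B
  set A : Fin n → Matrix (Fin r) (Fin r) ℂ :=
    fun x => Mc x - ((∑ j, P x j : ℝ) : ℂ) • rho with hA_def
  have hA_herm : ∀ x, (A x)ᴴ = A x := by
    intro x
    simp only [hA_def]
    rw [Matrix.conjTranspose_sub, Matrix.conjTranspose_smul, (hMc_psd x).1.eq,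
      hrho_herm, Complex.star_def, Complex.conj_ofReal]
  have hAN_trace : ∀ x y, (A x * N y).trace =
      ((P x y - (∑ j, P x j) * (∑ i, P i y) : ℝ) : ℂ) := by
    intro x y
    simp only [hA_def]
    rw [Matrix.sub_mul, smul_mul_assoc, Matrix.trace_sub, Matrix.trace_smul,
      hMcN_trace, hrhoN_trace, smul_eq_mul]
    push_cast
    ring
  -- normalized matrices B
  set B : Fin n → Matrix (Fin r) (Fin r) ℂ :=
    fun x => (((Real.sqrt (∑ j, P x j))⁻¹ : ℝ) : ℂ) • A x with hB_def
  have hB_herm : ∀ x, (B x)ᴴ = B x := by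
    intro x
    simp only [hB_def]
    rw [Matrix.conjTranspose_smul, hA_herm, Complex.star_def, Complex.conj_ofReal]
  have hBB_psd : ∀ x, (B x * B x).PosSemidef := by
    intro x
    have h := Matrix.posSemidef_conjTranspose_mul_self (B x)
    rwa [hB_herm] at h
  set K : Matrix (Fin r) (Fin r) ℂ := ∑ x, B x * B x with hK_def
  have hK_psd : K.PosSemidef := by
    rw [hK_def]
    exact psd_sum _ _ (fun x _ => hBB_psd x)
  have hsqrtPx_pos : ∀ x, 0 < Real.sqrt (∑ j, P x j) := fun x => Real.sqrt_pos.2 (hrow x)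
  have hBN_trace_re : ∀ x y, ((B x * N y).trace).re
      = (Real.sqrt (∑ j, P x j))⁻¹ * (P x y - (∑ j, P x j) * (∑ i, P i y)) := by
    intro x y
    simp only [hB_def]
    rw [smul_mul_assoc, Matrix.trace_smul, smul_eq_mul, hAN_trace,
      ← Complex.ofReal_mul, Complex.ofReal_re]
  have hBB_eq : ∀ x, B x * B x = ((((∑ j, P x j))⁻¹ : ℝ) : ℂ) • (A x * A x) := by
    intro x
    simp only [hB_def]
    rw [smul_mul_assoc, mul_smul_comm, smul_smul, ← Complex.ofReal_mul]
    congr 2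
    rw [← mul_inv]
    congr 1
    exact Real.mul_self_sqrt (hrow x).le
  -- trace bound for A x * A x
  have hMcMc : ∀ x, (Mc x * Mc x).trace.re ≤ (∑ j, P x j)^2 := by
    intro x
    have h := psd_trace_sq (hMc_psd x)
    rwa [hMc_trace, Complex.ofReal_re] at h
  have hrhorho : (rho * rho).trace = ((∑ i, (l i)^2 : ℝ) : ℂ) := by
    rw [hrho_def, Matrix.diagonal_mul_diagonal, Matrix.trace_diagonal]
    rw [Complex.ofReal_sum]
    refine Finset.sum_congr rfl fun i _ => ?_
    push_cast
    ring
  have hAA_trace : ∀ x, (A x * A x).trace.re =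
      (Mc x * Mc x).trace.re - 2 * (∑ j, P x j) * ((Mc x * rho).trace.re)
        + (∑ j, P x j)^2 * (∑ i, (l i)^2) := by
    intro x
    have expand : A x * A x = Mc x * Mc x - ((∑ j, P x j : ℝ) : ℂ) • (Mc x * rho)
        - ((∑ j, P x j : ℝ) : ℂ) • (rho * Mc x)
        + (((∑ j, P x j : ℝ) : ℂ) * ((∑ j, P x j : ℝ) : ℂ)) • (rho * rho) := by
      simp only [hA_def, Matrix.sub_mul, Matrix.mul_sub, smul_mul_assoc,
        mul_smul_comm, smul_smul, smul_sub, smul_add]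
      abel
    have tr_eq : (A x * A x).trace = (Mc x * Mc x).trace
        - (((2 * (∑ j, P x j) : ℝ)) : ℂ) * ((Mc x * rho).trace)
        + ((((∑ j, P x j)^2 * (∑ i, (l i)^2) : ℝ)) : ℂ) := by
      rw [expand, Matrix.trace_add, Matrix.trace_sub, Matrix.trace_sub,
        Matrix.trace_smul, Matrix.trace_smul, Matrix.trace_smul,
        Matrix.trace_mul_comm rho (Mc x), hrhorho]
      simp only [smul_eq_mul]
      push_cast
      ring
    rw [tr_eq]
    simp only [Complex.add_re, Complex.sub_re, Complex.ofReal_re,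
      Complex.re_ofReal_mul]
    try ring
  have hMcrho_sum : ∑ x, ((Mc x * rho).trace).re = ∑ i, (l i)^2 := by
    have h : ∑ x, (Mc x * rho).trace = ((∑ i, (l i)^2 : ℝ) : ℂ) := by
      rw [← Matrix.trace_sum, ← Finset.sum_mul, hMcsum, hrhorho]
    calc ∑ x, ((Mc x * rho).trace).re = (∑ x, (Mc x * rho).trace).re :=
          (Complex.re_sum _ _).symm
      _ = _ := by rw [h, Complex.ofReal_re]
  have hKtrace : K.trace.re ≤ 1 - ∑ i, (l i)^2 := by
    have hper : ∀ x, ((B x * B x).trace).re ≤ (∑ j, P x j)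
        - 2 * ((Mc x * rho).trace).re + (∑ j, P x j) * (∑ i, (l i)^2) := by
      intro x
      rw [hBB_eq x, Matrix.trace_smul, smul_eq_mul, Complex.re_ofReal_mul, hAA_trace x]
      have hp := hrow x
      have hinv : (0:ℝ) < (∑ j, P x j)⁻¹ := inv_pos.2 hp
      have expand2 : (∑ j, P x j)⁻¹ * ((∑ j, P x j)^2
            - 2 * (∑ j, P x j) * ((Mc x * rho).trace).re
            + (∑ j, P x j)^2 * (∑ i, (l i)^2))
          = (∑ j, P x j) - 2*((Mc x * rho).trace).re
            + (∑ j, P x j) * (∑ i, (l i)^2) := by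
        field_simp
      calc (∑ j, P x j)⁻¹ * ((Mc x * Mc x).trace.re
            - 2 * (∑ j, P x j) * ((Mc x * rho).trace).re
            + (∑ j, P x j)^2 * (∑ i, (l i)^2))
          ≤ (∑ j, P x j)⁻¹ * ((∑ j, P x j)^2
            - 2 * (∑ j, P x j) * ((Mc x * rho).trace).re
            + (∑ j, P x j)^2 * (∑ i, (l i)^2)) := by
            apply mul_le_mul_of_nonneg_left _ hinv.le
            linarith [hMcMc x]
        _ = _ := expand2
    have hKtr : K.trace.re = ∑ x, ((B x * B x).trace).re := by
      rw [hK_def, Matrix.trace_sum, Complex.re_sum]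
    rw [hKtr]
    refine (Finset.sum_le_sum (fun x _ => hper x)).trans ?_
    have hsum_eq : ∑ x, ((∑ j, P x j) - 2 * ((Mc x * rho).trace).re
        + (∑ j, P x j) * (∑ i, (l i)^2))
        = 1 - 2 * (∑ i, (l i)^2) + (∑ i, (l i)^2) := by
      rw [Finset.sum_add_distrib, Finset.sum_sub_distrib, ← Finset.mul_sum,
        hMcrho_sum, ← Finset.sum_mul, hPsum]
      ring
    rw [hsum_eq]
    linarith
  -- nonnegativity
  have ha_nonneg : ∀ y, 0 ≤ ((N y).trace).re := fun y => psd_trace_re_nonneg (hN_psd y)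
  have hb_nonneg : ∀ y, 0 ≤ ((N y * K).trace).re := by
    intro y
    have hNh_herm : ((hN_psd y).sqrt)ᴴ = (hN_psd y).sqrt := (hN_psd y).posSemidef_sqrt.1
    have hNhNh : (hN_psd y).sqrt * (hN_psd y).sqrt = N y := (hN_psd y).sqrt_mul_self
    have h1 : ((hN_psd y).sqrt * K * (hN_psd y).sqrt).trace = (N y * K).trace := by
      rw [Matrix.trace_mul_comm ((hN_psd y).sqrt * K) ((hN_psd y).sqrt),
        ← Matrix.mul_assoc, hNhNh]
    rw [← h1]
    have hpsd : ((hN_psd y).sqrt * K * (hN_psd y).sqrt).PosSemidef := by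
      have h := hK_psd.conjTranspose_mul_mul_same ((hN_psd y).sqrt)
      rwa [hNh_herm] at h
    exact psd_trace_re_nonneg hpsd
  -- the per-y bound
  have hS : ∀ y, (∑ x, (∑ j, P x j) * (P x y / (∑ j, P x j) - ∑ i, P i y) ^ 2)
      ≤ ((N y).trace).re * ((N y * K).trace).re := by
    intro y
    have hNh_herm : ((hN_psd y).sqrt)ᴴ = (hN_psd y).sqrt := (hN_psd y).posSemidef_sqrt.1
    have hNhNh : (hN_psd y).sqrt * (hN_psd y).sqrt = N y := (hN_psd y).sqrt_mul_self
    have hterm : ∀ x, (∑ j, P x j) * (P x y / (∑ j, P x j) - ∑ i, P i y) ^ 2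
        ≤ ((N y).trace).re * ((N y * (B x * B x)).trace).re := by
      intro x
      have hcs := trace_cs ((hN_psd y).sqrt) ((hN_psd y).sqrt * B x)
      have e1 : ((hN_psd y).sqrt)ᴴ * ((hN_psd y).sqrt * B x) = N y * B x := by
        rw [hNh_herm, ← Matrix.mul_assoc, hNhNh]
      have e2 : ((hN_psd y).sqrt)ᴴ * ((hN_psd y).sqrt) = N y := by
        rw [hNh_herm, hNhNh]
      have e3 : ((hN_psd y).sqrt * B x)ᴴ * ((hN_psd y).sqrt * B x)
          = B x * (N y * B x) := by
        rw [Matrix.conjTranspose_mul, hNh_herm, hB_herm, Matrix.mul_assoc,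
          ← Matrix.mul_assoc ((hN_psd y).sqrt) ((hN_psd y).sqrt) (B x), hNhNh]
      rw [e1, e2, e3] at hcs
      have e4 : (N y * B x).trace = (B x * N y).trace := Matrix.trace_mul_comm _ _
      have e5 : (B x * (N y * B x)).trace = (N y * (B x * B x)).trace := by
        rw [Matrix.trace_mul_comm (B x) (N y * B x), Matrix.mul_assoc]
      rw [e4, e5] at hcs
      have hval : ((B x * N y).trace).re ^ 2
          = (∑ j, P x j) * (P x y / (∑ j, P x j) - ∑ i, P i y) ^ 2 := by
        rw [hBN_trace_re x y]
        have hp := hrow x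
        have hne : (∑ j, P x j) ≠ 0 := hp.ne'
        have hsne : Real.sqrt (∑ j, P x j) ≠ 0 := (hsqrtPx_pos x).ne'
        have hss : Real.sqrt (∑ j, P x j) * Real.sqrt (∑ j, P x j) = ∑ j, P x j :=
          Real.mul_self_sqrt hp.le
        field_simp
        rw [Real.sq_sqrt hp.le]
      calc (∑ j, P x j) * (P x y / (∑ j, P x j) - ∑ i, P i y) ^ 2
          = ((B x * N y).trace).re ^ 2 := hval.symm
        _ ≤ _ := hcs
    have hsum2 : ∑ x, ((N y).trace).re * ((N y * (B x * B x)).trace).re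
        = ((N y).trace).re * ((N y * K).trace).re := by
      have hK2 : N y * K = ∑ x, N y * (B x * B x) := by
        rw [hK_def, Finset.mul_sum]
      rw [hK2, Matrix.trace_sum, Complex.re_sum, Finset.mul_sum]
    calc (∑ x, (∑ j, P x j) * (P x y / (∑ j, P x j) - ∑ i, P i y) ^ 2)
        ≤ ∑ x, ((N y).trace).re * ((N y * (B x * B x)).trace).re :=
          Finset.sum_le_sum (fun x _ => hterm x)
      _ = _ := hsum2
  -- final combination
  have hV_le : (∑ y, Real.sqrt (∑ x, (∑ j, P x j) *
        (P x y / (∑ j, P x j) - ∑ i, P i y) ^ 2))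
      ≤ ∑ y, Real.sqrt (((N y).trace).re * ((N y * K).trace).re) :=
    Finset.sum_le_sum fun y _ => Real.sqrt_le_sqrt (hS y)
  have hT_sq : (∑ y, Real.sqrt (((N y).trace).re * ((N y * K).trace).re))^2
      ≤ (∑ y, ((N y).trace).re) * (∑ y, ((N y * K).trace).re) :=
    Finset.sum_sq_le_sum_mul_sum_of_sq_eq_mul _ (fun y _ => ha_nonneg y)
      (fun y _ => hb_nonneg y)
      (fun y _ => Real.sq_sqrt (mul_nonneg (ha_nonneg y) (hb_nonneg y)))
  have hNa_sum : ∑ y, ((N y).trace).re = r := by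
    rw [← Complex.re_sum, ← Matrix.trace_sum, hNsum, Matrix.trace_one]
    simp
  have hNb_sum : ∑ y, ((N y * K).trace).re = K.trace.re := by
    rw [← Complex.re_sum, ← Matrix.trace_sum, ← Finset.sum_mul, hNsum, one_mul]
  have hV_nonneg : 0 ≤ ∑ y, Real.sqrt (∑ x, (∑ j, P x j) *
      (P x y / (∑ j, P x j) - ∑ i, P i y) ^ 2) :=
    Finset.sum_nonneg fun y _ => Real.sqrt_nonneg _
  have hVsq : (∑ y, Real.sqrt (∑ x, (∑ j, P x j) *
      (P x y / (∑ j, P x j) - ∑ i, P i y) ^ 2))^2 ≤ r * (1 - ∑ i, (l i)^2) := by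
    have h1 := pow_le_pow_left₀ hV_nonneg hV_le 2
    refine h1.trans (hT_sq.trans ?_)
    rw [hNa_sum, hNb_sum]
    have h0 : 0 ≤ K.trace.re := psd_trace_re_nonneg hK_psd
    nlinarith [hKtrace, hrpos']
  have hdiv : (∑ y, Real.sqrt (∑ x, (∑ j, P x j) *
      (P x y / (∑ j, P x j) - ∑ i, P i y) ^ 2))^2 / r ≤ 1 - ∑ i, (l i)^2 := by
    rw [div_le_iff₀ hrpos']
    calc _ ≤ (r : ℝ) * (1 - ∑ i, (l i)^2) := hVsq
      _ = (1 - ∑ i, (l i)^2) * r := by ring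
  linarith [hdiv]
end
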